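/- (Assignment feasibility for Theorem 5.) Let K = a·N + b with a ≥ 0 an integer, 1 ≤ b ≤ N − 1, and N_r ≤ N. Consider the extended cyclic assignment: datasets 1, …, aN are assigned cyclically, dataset k going to the N − N_r + 1 workers k, k−1, …, k−(N−N_r) in ZMod N; the remaining b datasets are identified with the b positions R = {r_1, …, r_b} ⊆ {1, …, N} of the allocation algorithm (α = b⌈(N−b)/b⌉ − (N−b), p_1 = ⋯ = p_α = ⌊(N−b)/b⌋, p_{α+1} = ⋯ = p_b = ⌈(N−b)/b⌉, r_1 = 1, r_{i+1} = r_i + 1 + p_i), and the dataset at position r is assigned to the workers r, r−1, …, r−(N−N_r) in ZMod N. Then every dataset is assigned to exactly N − N_r + 1 workers, and every worker is assigned at most M₁ = a·(N − N_r + 1) + ⌈(N − N_r + 1)/⌊N/b⌋⌉ datasets. -/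

import Mathlib

open Finset

-- packing lemma: g-separated values below L
lemma stmt12_pack {β : Type*} [DecidableEq β] {L g : ℕ} (hg : 1 ≤ g) (s : Finset β) (f : β → ℕ)
    (hlt : ∀ x ∈ s, f x < L)
    (hsep : ∀ x ∈ s, ∀ y ∈ s, x ≠ y → f x + g ≤ f y ∨ f y + g ≤ f x) :
    s.card ≤ (L - 1) / g + 1 := by
  have key : ∀ u v : ℕ, u + g ≤ v → u / g < v / g := by
    intro u v huv
    have h1 : (u + g) / g ≤ v / g := Nat.div_le_div_right huv
    have h2 : (u + g) / g = u / g + 1 := Nat.add_div_right u hg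
    omega
  have hinj : Set.InjOn (fun x => f x / g) s := by
    intro x hx y hy hxy
    by_contra hne
    rcases hsep x hx y hy hne with h | h
    · exact absurd hxy (Nat.ne_of_lt (key _ _ h))
    · exact absurd hxy.symm (Nat.ne_of_lt (key _ _ h))
  calc s.card = (s.image (fun x => f x / g)).card := (Finset.card_image_of_injOn hinj).symm
    _ ≤ (Finset.range ((L - 1) / g + 1)).card := by
        apply Finset.card_le_card
        intro v hv
        simp only [Finset.mem_image] at hv
        obtain ⟨x, hx, rfl⟩ := hv
        have h1 := hlt x hx
        have h2 : f x ≤ L - 1 := by omega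
        exact Finset.mem_range.mpr (Nat.lt_succ_of_le (Nat.div_le_div_right h2))
    _ = (L - 1) / g + 1 := Finset.card_range _

lemma stmt12_mem_window {N : ℕ} [NeZero N] {L : ℕ} (hL : L ≤ N) (c n : ZMod N) :
    n ∈ (Finset.range L).image (fun j : ℕ => c - (j : ZMod N)) ↔ (c - n).val < L := by
  constructor
  · intro h
    simp only [Finset.mem_image, Finset.mem_range] at h
    obtain ⟨j, hj, rfl⟩ := h
    have h2 : c - (c - (j : ZMod N)) = (j : ZMod N) := by ring
    rw [h2, ZMod.val_cast_of_lt (lt_of_lt_of_le hj hL)]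
    exact hj
  · intro h
    simp only [Finset.mem_image, Finset.mem_range]
    refine ⟨(c - n).val, h, ?_⟩
    rw [ZMod.natCast_val, ZMod.cast_id]
    ring

lemma stmt12_window_card {N : ℕ} [NeZero N] {L : ℕ} (hL : L ≤ N) (c : ZMod N) :
    ((Finset.range L).image (fun j : ℕ => c - (j : ZMod N))).card = L := by
  rw [Finset.card_image_of_injOn, Finset.card_range]
  intro j1 h1 j2 h2 he
  simp only [Finset.coe_range, Set.mem_Iio] at h1 h2
  have h3 : (j1 : ZMod N) = (j2 : ZMod N) := by
    have := sub_right_injective he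
    exact this
  have := congrArg ZMod.val h3
  rwa [ZMod.val_cast_of_lt (lt_of_lt_of_le h1 hL),
    ZMod.val_cast_of_lt (lt_of_lt_of_le h2 hL)] at this

lemma stmt12_count_cycle {N L : ℕ} [NeZero N] (hL : L ≤ N) (n : ZMod N) :
    ((Finset.range N).filter (fun t => (((t + 1 : ℕ) : ZMod N) - n).val < L)).card = L := by
  set ψ : ℕ → ℕ := fun t => (((t + 1 : ℕ) : ZMod N) - n).val with hψ
  have hinj : Set.InjOn ψ (Finset.range N) := by
    intro t1 h1 t2 h2 he
    simp only [Finset.coe_range, Set.mem_Iio] at h1 h2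
    have h3 : ((t1 + 1 : ℕ) : ZMod N) - n = ((t2 + 1 : ℕ) : ZMod N) - n :=
      ZMod.val_injective N he
    have h4 : (t1 : ZMod N) = (t2 : ZMod N) := by
      push_cast at h3
      have := sub_left_injective h3
      exact add_right_cancel this
    have := congrArg ZMod.val h4
    rwa [ZMod.val_cast_of_lt h1, ZMod.val_cast_of_lt h2] at this
  have himg : (Finset.range N).image ψ = Finset.range N := by
    apply Finset.eq_of_subset_of_card_le
    · intro v hv
      simp only [Finset.mem_image] at hv
      obtain ⟨t, _, rfl⟩ := hv
      exact Finset.mem_range.mpr (ZMod.val_lt _)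
    · rw [Finset.card_image_of_injOn hinj]
  calc ((Finset.range N).filter fun t => ψ t < L).card
      = (((Finset.range N).filter fun t => ψ t < L).image ψ).card :=
        (Finset.card_image_of_injOn (hinj.mono (Finset.filter_subset _ _))).symm
    _ = (((Finset.range N).image ψ).filter (· < L)).card := by
        rw [Finset.filter_image]
    _ = L := by
        rw [himg]
        have : (Finset.range N).filter (· < L) = Finset.range L := by
          ext t; simp only [Finset.mem_filter, Finset.mem_range]; omega
        rw [this, Finset.card_range]

lemma stmt12_count_left {N L : ℕ} [NeZero N] (hL : L ≤ N) (a : ℕ) (n : ZMod N) :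
    ((Finset.range (a * N)).filter
      (fun t => (((t + 1 : ℕ) : ZMod N) - n).val < L)).card = a * L := by
  induction a with
  | zero => simp
  | succ a ih =>
    have hsplit : Finset.range ((a + 1) * N) =
        Finset.range (a * N) ∪ Finset.Ico (a * N) (a * N + N) := by
      ext t
      simp only [Finset.mem_union, Finset.mem_range, Finset.mem_Ico]
      have : (a + 1) * N = a * N + N := by ring
      omega
    have hdisj : Disjoint (Finset.range (a * N)) (Finset.Ico (a * N) (a * N + N)) := by
      rw [Finset.range_eq_Ico]
      exact Finset.Ico_disjoint_Ico_consecutive _ _ _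
    rw [hsplit, Finset.filter_union,
      Finset.card_union_of_disjoint (Finset.disjoint_filter_filter hdisj), ih]
    have hIco : ((Finset.Ico (a * N) (a * N + N)).filter
        (fun t => (((t + 1 : ℕ) : ZMod N) - n).val < L)).card = L := by
      rw [Finset.card_filter, Finset.sum_Ico_eq_sum_range]
      have hNN : a * N + N - a * N = N := by omega
      rw [hNN]
      have hcast : ∀ i : ℕ, ((a * N + i + 1 : ℕ) : ZMod N) = ((i + 1 : ℕ) : ZMod N) := by
        intro i
        push_cast
        rw [ZMod.natCast_self]
        ring
      calc (∑ i ∈ Finset.range N,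
              if (((a * N + i + 1 : ℕ) : ZMod N) - n).val < L then 1 else 0)
          = ∑ i ∈ Finset.range N,
              if (((i + 1 : ℕ) : ZMod N) - n).val < L then 1 else 0 := by
            refine Finset.sum_congr rfl fun i _ => ?_
            rw [hcast i]
        _ = L := by rw [← Finset.card_filter, stmt12_count_cycle hL n]
    rw [hIco]
    ring




/-- assignment feasibility for Theorem 5: for `K = a·N + b` datasets under
the extended cyclic assignment (the first `a·N` datasets assigned cyclically, dataset `k`
to workers `k, k−1, …, k−(N−N_r)`; the remaining `b` datasets placed at the positions
`r_1, …, r_b` of the Appendix E allocation algorithm, the dataset at position `r` going to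
workers `r, r−1, …, r−(N−N_r)`), every dataset is assigned to exactly `N − N_r + 1`
workers and every worker gets at most
`M₁ = a(N − N_r + 1) + ⌈(N − N_r + 1)/⌊N/b⌋⌉` datasets. -/
theorem stmt_12 (N b a Nr : ℕ) (hN : 2 ≤ N) (hb1 : 1 ≤ b) (hb2 : b ≤ N - 1)
    (hNr : 1 ≤ Nr) (hNrN : Nr ≤ N) :
    let cdiv : ℕ → ℕ → ℕ := fun x y => (x + y - 1) / y
    let α : ℕ := b * cdiv (N - b) b - (N - b)
    let p : ℕ → ℕ := fun i => if i ≤ α then (N - b) / b else cdiv (N - b) b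
    let r : ℕ → ℕ := fun i => 1 + ∑ j ∈ Finset.range i, (1 + p (j + 1))
    let workers : (Fin (a * N) ⊕ Fin b) → Finset (ZMod N) :=
      Sum.elim
        (fun k => (Finset.range (N - Nr + 1)).image
          fun j : ℕ => (((k : ℕ) + 1 : ℕ) : ZMod N) - (j : ZMod N))
        (fun i => (Finset.range (N - Nr + 1)).image
          fun j : ℕ => ((r (i : ℕ) : ℕ) : ZMod N) - (j : ZMod N))
    (∀ d : Fin (a * N) ⊕ Fin b, (workers d).card = N - Nr + 1) ∧
    (∀ n : ZMod N,
      (Finset.univ.filter fun d : Fin (a * N) ⊕ Fin b => n ∈ workers d).card ≤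
        a * (N - Nr + 1) + cdiv (N - Nr + 1) (N / b)) := by
  intro cdiv α p r workers
  haveI : NeZero N := ⟨by omega⟩
  set L : ℕ := N - Nr + 1 with hLdef
  have hL : L ≤ N := by omega
  have hL1 : 1 ≤ L := by omega
  have hb0 : 0 < b := hb1
  have hbN : b < N := by omega
  set g : ℕ := N / b with hgdef
  have hg1 : 1 ≤ g := Nat.one_le_div_iff hb0 |>.mpr (le_of_lt hbN)
  -- basic arithmetic facts
  have hfg : (N - b) / b + 1 = g := by
    have h1 : (N - b + b) / b = (N - b) / b + 1 := Nat.add_div_right _ hb0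
    rw [Nat.sub_add_cancel (le_of_lt hbN)] at h1
    omega
  have hcd : ∀ x y : ℕ, cdiv x y = (x + y - 1) / y := fun _ _ => rfl
  have hcdle : (N - b) / b ≤ cdiv (N - b) b := by
    rw [hcd]
    exact Nat.div_le_div_right (by omega)
  have hgap : ∀ t : ℕ, g ≤ 1 + p t := by
    intro t
    have hp : p t = if t ≤ α then (N - b) / b else cdiv (N - b) b := rfl
    rw [hp]
    split <;> omega
  -- the value of cdiv (N-b) b and α
  set M : ℕ := N - b with hMdef
  set q : ℕ := M / b with hqdef
  set rem : ℕ := M % b with hremdef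
  have hdiv : b * q + rem = M := Nat.div_add_mod M b
  have hremb : rem < b := Nat.mod_lt _ hb0
  have hc0 : cdiv M b = if rem = 0 then q else q + 1 := by
    rw [hcd]
    by_cases h : rem = 0
    · have h2 : M + b - 1 = b * q + (b - 1) := by omega
      rw [if_pos h, h2, Nat.mul_add_div hb0, Nat.div_eq_of_lt (by omega : b - 1 < b)]
      omega
    · have hbq : b * (q + 1) = b * q + b := by ring
      have h2 : M + b - 1 = b * (q + 1) + (rem - 1) := by omega
      rw [if_neg h, h2, Nat.mul_add_div hb0, Nat.div_eq_of_lt (by omega : rem - 1 < b)]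
  have hαdef : α = b * cdiv M b - M := rfl
  have hbq1 : b * (q + 1) = b * q + b := by ring
  have hαval : α = if rem = 0 then 0 else b - rem := by
    rw [hαdef, hc0]
    by_cases h : rem = 0
    · rw [if_pos h, if_pos h]; omega
    · rw [if_neg h, if_neg h]; omega
  have hαltb : α < b := by rw [hαval]; split <;> omega
  -- sum of the gaps equals N
  have hsum : ∑ j ∈ Finset.range b, (1 + p (j + 1)) = N := by
    have hps : ∀ j : ℕ, p (j + 1) = if j + 1 ≤ α then (N - b) / b else cdiv (N - b) b :=
      fun _ => rfl
    have h1 : ∑ j ∈ Finset.range b, (1 + p (j + 1))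
        = b + ∑ j ∈ Finset.range b, p (j + 1) := by
      rw [Finset.sum_add_distrib, Finset.sum_const, smul_eq_mul, mul_one, Finset.card_range]
    have h2 : ∑ j ∈ Finset.range b, p (j + 1)
        = ∑ j ∈ Finset.range b, (if j + 1 ≤ α then q else cdiv M b) := by
      refine Finset.sum_congr rfl fun j _ => hps j
    have hf1 : (Finset.range b).filter (fun j => j + 1 ≤ α) = Finset.range α := by
      ext j
      simp only [Finset.mem_filter, Finset.mem_range]
      omega
    have hf2 : (Finset.range b).filter (fun j => ¬ j + 1 ≤ α) = Finset.Ico α b := by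
      ext j
      simp only [Finset.mem_filter, Finset.mem_range, Finset.mem_Ico]
      omega
    have h3 : ∑ j ∈ Finset.range b, (if j + 1 ≤ α then q else cdiv M b)
        = α * q + (b - α) * cdiv M b := by
      rw [Finset.sum_ite, Finset.sum_const, Finset.sum_const, hf1, hf2,
        Finset.card_range, Nat.card_Ico, smul_eq_mul, smul_eq_mul]
    have h4 : α * q + (b - α) * cdiv M b = M := by
      by_cases h : rem = 0
      · have hα0 : α = 0 := by rw [hαval, if_pos h]
        rw [hα0, hc0, if_pos h]
        simp only [Nat.zero_mul, Nat.sub_zero, Nat.zero_add]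
        omega
      · have hα1 : α = b - rem := by rw [hαval, if_neg h]
        rw [hα1, hc0, if_neg h]
        have hba : b - (b - rem) = rem := by omega
        rw [hba]
        have hx1 : (b - rem) * q + rem * q = b * q := by
          rw [← Nat.add_mul, Nat.sub_add_cancel (le_of_lt hremb)]
        have hx2 : rem * (q + 1) = rem * q + rem := by ring
        omega
    omega
  -- properties of r
  have hrdef : ∀ i : ℕ, r i = 1 + ∑ j ∈ Finset.range i, (1 + p (j + 1)) := fun _ => rfl
  have hrb : r b = N + 1 := by rw [hrdef, hsum]; omega
  have hmono : ∀ i j : ℕ, i < j → r i + g ≤ r j := by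
    intro i j hij
    have hsplit : ∑ t ∈ Finset.range j, (1 + p (t + 1))
        = ∑ t ∈ Finset.range i, (1 + p (t + 1)) + ∑ t ∈ Finset.Ico i j, (1 + p (t + 1)) := by
      rw [Finset.range_eq_Ico, Finset.range_eq_Ico]
      exact (Finset.sum_Ico_consecutive (fun t => 1 + p (t + 1)) (Nat.zero_le i) (le_of_lt hij)).symm
    have hone : g ≤ ∑ t ∈ Finset.Ico i j, (1 + p (t + 1)) := by
      calc g ≤ 1 + p (i + 1) := hgap _
        _ ≤ ∑ t ∈ Finset.Ico i j, (1 + p (t + 1)) :=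
          Finset.single_le_sum (f := fun t => 1 + p (t + 1)) (fun t _ => Nat.zero_le _)
            (Finset.mem_Ico.mpr ⟨le_refl i, hij⟩)
    rw [hrdef, hrdef, hsplit]
    omega
  have hr1 : ∀ i : ℕ, 1 ≤ r i := fun i => by rw [hrdef]; omega
  -- cyclic separation of the positions r i
  have hvsep : ∀ i : ℕ, i < b → ∀ j : ℕ, j < b → i ≠ j →
      g ≤ (((r j : ℕ) : ZMod N) - ((r i : ℕ) : ZMod N)).val := by
    have key : ∀ i j : ℕ, i < j → j < b →
        (((r j : ℕ) : ZMod N) - ((r i : ℕ) : ZMod N)).val = r j - r i ∧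
        (((r i : ℕ) : ZMod N) - ((r j : ℕ) : ZMod N)).val = N - (r j - r i) := by
      intro i j hij hjb
      set d : ℕ := r j - r i with hd
      have h1 : r i + g ≤ r j := hmono i j hij
      have h2 : r j + g ≤ r b := hmono j b hjb
      have h3 : 1 ≤ r i := hr1 i
      have hdg : g ≤ d := by omega
      have hdN : d ≤ N - g := by omega
      have hrij : r j = r i + d := by omega
      have hcast : ((r j : ℕ) : ZMod N) - ((r i : ℕ) : ZMod N) = ((d : ℕ) : ZMod N) := by
        rw [hrij]
        push_cast
        ring
      have hcast2 : ((r i : ℕ) : ZMod N) - ((r j : ℕ) : ZMod N) = ((N - d : ℕ) : ZMod N) := by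
        rw [hrij, Nat.cast_sub (by omega : d ≤ N), ZMod.natCast_self]
        push_cast
        ring
      constructor
      · rw [hcast, ZMod.val_cast_of_lt (by omega : d < N)]
      · rw [hcast2, ZMod.val_cast_of_lt (by omega : N - d < N)]
    intro i hi j hj hij
    rcases Nat.lt_or_ge i j with h | h
    · have := (key i j h hj).1
      have h1 : r i + g ≤ r j := hmono i j h
      omega
    · have hji : j < i := by omega
      have := (key j i hji hi).2
      have h1 : r j + g ≤ r i := hmono j i hji
      have h2 : r i + g ≤ r b := hmono i b hi
      have h3 : 1 ≤ r j := hr1 j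
      omega
  -- part 1
  have part1 : ∀ d : Fin (a * N) ⊕ Fin b, (workers d).card = L := by
    intro d
    have hw : workers = Sum.elim
        (fun k : Fin (a * N) => (Finset.range L).image
          fun j : ℕ => (((k : ℕ) + 1 : ℕ) : ZMod N) - (j : ZMod N))
        (fun i : Fin b => (Finset.range L).image
          fun j : ℕ => ((r (i : ℕ) : ℕ) : ZMod N) - (j : ZMod N)) := rfl
    rcases d with k | i
    · rw [hw]
      exact stmt12_window_card hL _
    · rw [hw]
      exact stmt12_window_card hL _
  refine ⟨part1, ?_⟩
  intro n
  -- split the filter over the sum type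
  classical
  have hsplit : (Finset.univ.filter fun d : Fin (a * N) ⊕ Fin b => n ∈ workers d)
      = (Finset.univ.filter fun k : Fin (a * N) => n ∈ workers (Sum.inl k)).disjSum
        (Finset.univ.filter fun i : Fin b => n ∈ workers (Sum.inr i)) := by
    ext x
    rcases x with k | i <;>
      simp [Finset.inl_mem_disjSum, Finset.inr_mem_disjSum]
  rw [hsplit, Finset.card_disjSum]
  have hleft : (Finset.univ.filter fun k : Fin (a * N) => n ∈ workers (Sum.inl k)).card
      = a * L := by
    have hmemw : ∀ k : Fin (a * N),
        (n ∈ workers (Sum.inl k)) ↔ ((((k : ℕ) + 1 : ℕ) : ZMod N) - n).val < L := by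
      intro k
      exact stmt12_mem_window hL _ n
    have h1 : (Finset.univ.filter fun k : Fin (a * N) => n ∈ workers (Sum.inl k)).card
        = (Finset.univ.filter fun k : Fin (a * N) =>
            ((((k : ℕ) + 1 : ℕ) : ZMod N) - n).val < L).card := by
      congr 1
      exact Finset.filter_congr fun k _ => by rw [hmemw k]
    rw [h1]
    have h2 : (Finset.univ.filter fun k : Fin (a * N) =>
        ((((k : ℕ) + 1 : ℕ) : ZMod N) - n).val < L).card
        = ((Finset.range (a * N)).filter
            (fun t => (((t + 1 : ℕ) : ZMod N) - n).val < L)).card := by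
      rw [Finset.card_filter, Finset.card_filter]
      exact Fin.sum_univ_eq_sum_range
        (fun t => if (((t + 1 : ℕ) : ZMod N) - n).val < L then 1 else 0) (a * N)
    rw [h2]
    exact stmt12_count_left hL a n
  have hright : (Finset.univ.filter fun i : Fin b => n ∈ workers (Sum.inr i)).card
      ≤ (L - 1) / g + 1 := by
    set s := Finset.univ.filter fun i : Fin b => n ∈ workers (Sum.inr i) with hs
    set f : Fin b → ℕ := fun i => (((r (i : ℕ) : ℕ) : ZMod N) - n).val with hf
    have hmem : ∀ i : Fin b, i ∈ s ↔ f i < L := by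
      intro i
      rw [hs, Finset.mem_filter]
      simp only [Finset.mem_univ, true_and]
      exact stmt12_mem_window hL _ n
    apply stmt12_pack hg1 s f
    · intro x hx
      exact (hmem x).mp hx
    · intro x _ y _ hxy
      have hxyv : (x : ℕ) ≠ (y : ℕ) := fun h => hxy (Fin.ext h)
      set u : ZMod N := ((r (x : ℕ) : ℕ) : ZMod N) with hu
      set v : ZMod N := ((r (y : ℕ) : ℕ) : ZMod N) with hv
      have hsep1 : g ≤ (v - u).val := hvsep (x : ℕ) x.isLt (y : ℕ) y.isLt hxyv
      have hsep2 : g ≤ (u - v).val := hvsep (y : ℕ) y.isLt (x : ℕ) x.isLt hxyv.symm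
      have hfx : f x = (u - n).val := rfl
      have hfy : f y = (v - n).val := rfl
      rcases Nat.lt_trichotomy (f x) (f y) with h | h | h
      · left
        have hsub : ((v - n) - (u - n)).val = (v - n).val - (u - n).val :=
          ZMod.val_sub (by rw [hfx, hfy] at h; omega)
        have hvu : (v - n) - (u - n) = v - u := by ring
        rw [hvu] at hsub
        rw [hfx, hfy] at h ⊢
        omega
      · exfalso
        have huv : u - n = v - n := ZMod.val_injective N (by rw [hfx, hfy] at h; exact h)
        have huv2 : u = v := by
          have h5 := congrArg (fun z => z + n) huv
          simpa [sub_add_cancel] using h5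
        have h6 : v - u = 0 := by rw [huv2, sub_self]
        rw [h6, ZMod.val_zero] at hsep1
        omega
      · right
        have hsub : ((u - n) - (v - n)).val = (u - n).val - (v - n).val :=
          ZMod.val_sub (by rw [hfx, hfy] at h; omega)
        have hvu : (u - n) - (v - n) = u - v := by ring
        rw [hvu] at hsub
        rw [hfx, hfy] at h ⊢
        omega
  have hceil : cdiv L g = (L - 1) / g + 1 := by
    rw [hcd]
    have h1 : L + g - 1 = (L - 1) + g := by omega
    rw [h1, Nat.add_div_right _ hg1]
  rw [hceil]
  omega
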